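/- Let n, d ≥ 1 and k_0 ≥ 0 be integers and fix ζ ∈ ℂ with |ζ| = 1. Let Q and S be n×n complex matrices with Q invertible, let G̃₂ be the 2n×2n matrix whose (2i−1,2j−1) entry is δ_{ij}, (2i,2j−1) entry is −i·δ_{ij}, (2i−1,2j) entry is Q_{ij} + S_{ij}, and (2i,2j) entry is i·Q_{ij} − i·S_{ij}, and let B (d×2n), C (d×d) and E (2n×d) be arbitrary complex matrices. Define the (2n+2d)×(2n+2d) block upper triangular matrix G̃ with diagonal blocks (1/2)·I_d, G̃₂, −iζ^{k_0}·I_d and upper blocks B, C, E. Then G̃ and its entrywise conjugate conj(G̃) are invertible, and det(−(conj G̃)^{-1} · G̃) = (−1)^{n+d} · ζ^{2dk_0} · det Q / conj(det Q). (Consequently, the Maslov index of the Riemann–Hilbert problem defined by such a matrix map on the unit circle equals the winding number of det(−(conj Q)^{-1}Q) plus 2dk_0.) -/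

import Mathlib

open ComplexConjugate

noncomputable section

/-- The `2n × 2n` matrix `G̃₂`: rows/columns are indexed by pairs `(i,a)` with
`a = 0` corresponding to the odd row/column `2i−1` and `a = 1` to the even one `2i`. -/
def Gt2 (n : ℕ) (Q S : Matrix (Fin n) (Fin n) ℂ) :
    Matrix (Fin n × Fin 2) (Fin n × Fin 2) ℂ :=
  Matrix.of fun p q =>
    if p.2 = 0 then
      (if q.2 = 0 then (if p.1 = q.1 then (1 : ℂ) else 0)
       else Q p.1 q.1 + S p.1 q.1)
    else
      (if q.2 = 0 then (if p.1 = q.1 then -Complex.I else 0)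
       else Complex.I * Q p.1 q.1 - Complex.I * S p.1 q.1)

/-- The block upper triangular matrix `G̃` of size `(2n+2d) × (2n+2d)`, with diagonal
blocks `(1/2)·I_d`, `G̃₂`, `−iζ^{k₀}·I_d` and upper blocks `B`, `C`, `E`. -/
def Gt (n d k0 : ℕ) (ζ : ℂ) (Q S : Matrix (Fin n) (Fin n) ℂ)
    (B : Matrix (Fin d) (Fin n × Fin 2) ℂ) (C : Matrix (Fin d) (Fin d) ℂ)
    (E : Matrix (Fin n × Fin 2) (Fin d) ℂ) :
    Matrix (Fin d ⊕ ((Fin n × Fin 2) ⊕ Fin d)) (Fin d ⊕ ((Fin n × Fin 2) ⊕ Fin d)) ℂ :=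
  Matrix.of fun p q =>
    match p, q with
    | .inl a, .inl b => if a = b then (1 / 2 : ℂ) else 0
    | .inl a, .inr (.inl q') => B a q'
    | .inl a, .inr (.inr b) => C a b
    | .inr (.inl p'), .inr (.inl q') => Gt2 n Q S p' q'
    | .inr (.inl p'), .inr (.inr b) => E p' b
    | .inr (.inr a), .inr (.inr b) => if a = b then -Complex.I * ζ ^ k0 else 0
    | _, _ => 0

def myE (n : ℕ) : (Fin n ⊕ Fin n) ≃ (Fin n × Fin 2) where
  toFun := Sum.elim (fun i => (i, 0)) (fun i => (i, 1))
  invFun p := if p.2 = 0 then .inl p.1 else .inr p.1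
  left_inv x := by rcases x with i | i <;> simp
  right_inv p := by rcases p with ⟨i, a⟩; fin_cases a <;> simp

lemma Gt2_eq (n : ℕ) (Q S : Matrix (Fin n) (Fin n) ℂ) :
    Gt2 n Q S = (Matrix.reindex (myE n) (myE n))
      (Matrix.fromBlocks 1 (Q + S) ((-Complex.I) • (1 : Matrix (Fin n) (Fin n) ℂ))
        (Complex.I • Q - Complex.I • S)) := by
  ext ⟨i, a⟩ ⟨j, b⟩
  fin_cases a <;> fin_cases b <;>
    simp [Gt2, myE, Matrix.one_apply, Matrix.reindex_apply, Matrix.submatrix_apply,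
      mul_ite, mul_comm, apply_ite (fun x : ℂ => -x)]

lemma det_Gt2 (n : ℕ) (Q S : Matrix (Fin n) (Fin n) ℂ) :
    (Gt2 n Q S).det = (2 * Complex.I) ^ n * Q.det := by
  rw [Gt2_eq, Matrix.det_reindex_self, Matrix.det_fromBlocks_one₁₁]
  have h : Complex.I • Q - Complex.I • S -
      ((-Complex.I) • (1 : Matrix (Fin n) (Fin n) ℂ)) * (Q + S)
      = (2 * Complex.I) • Q := by
    rw [Matrix.smul_mul, Matrix.one_mul]
    module
  rw [h, Matrix.det_smul, Fintype.card_fin]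

lemma Gt_eq (n d k0 : ℕ) (ζ : ℂ) (Q S : Matrix (Fin n) (Fin n) ℂ)
    (B : Matrix (Fin d) (Fin n × Fin 2) ℂ) (C : Matrix (Fin d) (Fin d) ℂ)
    (E : Matrix (Fin n × Fin 2) (Fin d) ℂ) :
    Gt n d k0 ζ Q S B C E =
      Matrix.fromBlocks ((1 / 2 : ℂ) • 1)
        (Matrix.of fun a => Sum.elim (B a) (C a)) 0
        (Matrix.fromBlocks (Gt2 n Q S) E 0 ((-Complex.I * ζ ^ k0) • 1)) := by
  ext p q
  rcases p with a | (p' | a) <;> rcases q with b | (q' | b) <;>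
    simp [Gt, Matrix.one_apply, mul_ite, apply_ite (fun x : ℂ => -x)]

lemma det_Gt (n d k0 : ℕ) (ζ : ℂ) (Q S : Matrix (Fin n) (Fin n) ℂ)
    (B : Matrix (Fin d) (Fin n × Fin 2) ℂ) (C : Matrix (Fin d) (Fin d) ℂ)
    (E : Matrix (Fin n × Fin 2) (Fin d) ℂ) :
    (Gt n d k0 ζ Q S B C E).det =
      (1 / 2 : ℂ) ^ d * ((2 * Complex.I) ^ n * Q.det) * (-Complex.I * ζ ^ k0) ^ d := by
  rw [Gt_eq, Matrix.det_fromBlocks_zero₂₁, Matrix.det_fromBlocks_zero₂₁, det_Gt2,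
    Matrix.det_smul, Matrix.det_smul]
  simp [Fintype.card_fin]
  ring

theorem stmt15 (n d : ℕ) (hn : 1 ≤ n) (hd : 1 ≤ d) (k0 : ℕ)
    (ζ : ℂ) (hζ : ‖ζ‖ = 1)
    (Q S : Matrix (Fin n) (Fin n) ℂ) (hQ : IsUnit Q)
    (B : Matrix (Fin d) (Fin n × Fin 2) ℂ) (C : Matrix (Fin d) (Fin d) ℂ)
    (E : Matrix (Fin n × Fin 2) (Fin d) ℂ) :
    IsUnit (Gt n d k0 ζ Q S B C E) ∧
    IsUnit ((Gt n d k0 ζ Q S B C E).map (starRingEnd ℂ)) ∧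
    (-(((Gt n d k0 ζ Q S B C E).map (starRingEnd ℂ))⁻¹ * Gt n d k0 ζ Q S B C E)).det
      = (-1) ^ (n + d) * ζ ^ (2 * d * k0) * Q.det / conj Q.det := by
  have hζ0 : ζ ≠ 0 := by intro h; rw [h] at hζ; simp at hζ
  have hQ0 : Q.det ≠ 0 := by
    have := (Matrix.isUnit_iff_isUnit_det Q).mp hQ
    exact this.ne_zero
  have hzc : (conj ζ : ℂ) = ζ⁻¹ := by
    have h1 : ζ * conj ζ = 1 := by
      rw [Complex.mul_conj]
      norm_cast
      rw [Complex.normSq_eq_norm_sq, hζ]; norm_num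
    field_simp at h1 ⊢
    linear_combination h1
  have hdetG := det_Gt n d k0 ζ Q S B C E
  have hG0 : (Gt n d k0 ζ Q S B C E).det ≠ 0 := by
    rw [hdetG]
    apply mul_ne_zero
    apply mul_ne_zero
    · exact pow_ne_zero _ (by norm_num)
    · exact mul_ne_zero (pow_ne_zero _ (by simp [Complex.I_ne_zero])) hQ0
    · exact pow_ne_zero _ (mul_ne_zero (by simp [Complex.I_ne_zero]) (pow_ne_zero _ hζ0))
  have hconj : ((Gt n d k0 ζ Q S B C E).map (starRingEnd ℂ)).det
      = conj ((Gt n d k0 ζ Q S B C E).det) := by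
    rw [← RingHom.mapMatrix_apply, ← RingHom.map_det]
  have hGc0 : ((Gt n d k0 ζ Q S B C E).map (starRingEnd ℂ)).det ≠ 0 := by
    rw [hconj]; simpa using hG0
  refine ⟨(Matrix.isUnit_iff_isUnit_det _).mpr (isUnit_iff_ne_zero.mpr hG0),
    (Matrix.isUnit_iff_isUnit_det _).mpr (isUnit_iff_ne_zero.mpr hGc0), ?_⟩
  rw [Matrix.det_neg, Matrix.det_mul, Matrix.det_nonsing_inv, Ring.inverse_eq_inv,
    hconj, hdetG]
  have hcard : Fintype.card (Fin d ⊕ ((Fin n × Fin 2) ⊕ Fin d)) = 2 * (n + d) := by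
    simp; ring
  rw [hcard]
  have hm1 : ((-1 : ℂ)) ^ (2 * (n + d)) = 1 := by
    rw [pow_mul]; norm_num
  rw [hm1, one_mul]
  have hconjQ0 : (conj Q.det : ℂ) ≠ 0 := by simpa using hQ0
  set w : ℂ := -Complex.I * ζ ^ k0 with hw
  have hw0 : w ≠ 0 := mul_ne_zero (by simp [Complex.I_ne_zero]) (pow_ne_zero _ hζ0)
  have hwc : conj w = w⁻¹ := by
    have : w * (Complex.I * (ζ⁻¹) ^ k0) = 1 := by
      rw [hw, inv_pow]
      linear_combination (-Complex.I ^ 2) * mul_inv_cancel₀ (pow_ne_zero k0 hζ0) - Complex.I_sq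
    rw [inv_eq_of_mul_eq_one_right this]
    simp [hw, map_mul, map_pow, Complex.conj_I, hzc]
  have hw2 : w ^ (2 * d) = (-1) ^ d * ζ ^ (2 * d * k0) := by
    rw [pow_mul]
    have : w ^ 2 = -(ζ ^ (2 * k0)) := by
      rw [hw]; ring_nf; simp [Complex.I_sq]
    rw [this, neg_pow, ← pow_mul, show 2 * k0 * d = 2 * d * k0 by ring]
  have hcexp : conj ((1 / 2 : ℂ) ^ d * ((2 * Complex.I) ^ n * Q.det) * w ^ d)
      = (1 / 2 : ℂ) ^ d * ((-1) ^ n * (2 * Complex.I) ^ n * conj Q.det) * (w⁻¹) ^ d := by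
    simp only [map_mul, map_pow, map_div₀, map_one, map_ofNat, Complex.conj_I, hwc]
    rw [show (2 : ℂ) * -Complex.I = -1 * (2 * Complex.I) by ring, mul_pow]
  rw [hcexp]
  have h2I : ((2 : ℂ) * Complex.I) ^ n ≠ 0 := pow_ne_zero _ (by simp [Complex.I_ne_zero])
  rw [inv_mul_eq_iff_eq_mul₀ (by
    exact mul_ne_zero (mul_ne_zero (pow_ne_zero _ (by norm_num))
      (mul_ne_zero (mul_ne_zero (pow_ne_zero _ (by norm_num)) h2I) hconjQ0))
      (pow_ne_zero _ (inv_ne_zero hw0)))]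
  field_simp
  ring_nf
  have hwd : w⁻¹ ^ d * w ^ d = 1 := by rw [← mul_pow, inv_mul_cancel₀ hw0, one_pow]
  rw [show ((-1 : ℂ)) ^ (n * 2) = 1 by
        rw [show n * 2 = 2 * n from by ring, pow_mul]; norm_num, mul_one]
  linear_combination (w⁻¹ ^ d) * hw2 - w ^ d * hwd
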